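/- Let O be the ring of integers in a finite extension of Q_p with prime 𝔭 above p, let a be a positive integer, and let L = ⊕_{i=0}^k (O/𝔭^a)·X^{k-i}Y^i. Define T on L by T(P) = Σ_{u=0}^{p-1} P(X + uY, pY). Then T is nilpotent; in fact T^{a(k+1)} = 0 on L. -/
import Mathlib

open MvPolynomial

/-- The operator `T(P) = ∑_{u=0}^{p-1} P(X + u Y, p Y)` on polynomials over `Z/(p^a)`. -/
noncomputable def Uoperator (p a : ℕ) :
    Module.End (ZMod (p ^ a)) (MvPolynomial (Fin 2) (ZMod (p ^ a))) :=
  ∑ u ∈ Finset.range p,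
    (aeval ![X 0 + (u : ZMod (p ^ a)) • X 1, (p : ZMod (p ^ a)) • X 1] :
      MvPolynomial (Fin 2) (ZMod (p ^ a)) →ₐ[ZMod (p ^ a)]
        MvPolynomial (Fin 2) (ZMod (p ^ a))).toLinearMap

noncomputable def Lsub (p a k j : ℕ) :
    Submodule (ZMod (p ^ a)) (MvPolynomial (Fin 2) (ZMod (p ^ a))) :=
  Submodule.span (ZMod (p ^ a))
    {Q | ∃ i, j ≤ i ∧ i ≤ k ∧ Q = X 0 ^ (k - i) * X 1 ^ i}

lemma Lsub_anti (p a k : ℕ) {j j' : ℕ} (h : j ≤ j') : Lsub p a k j' ≤ Lsub p a k j := by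
  apply Submodule.span_mono
  rintro Q ⟨i, h1, h2, rfl⟩
  exact ⟨i, le_trans h h1, h2, rfl⟩

lemma Lsub_top_eq_bot (p a k : ℕ) : Lsub p a k (k + 1) = ⊥ := by
  rw [Lsub, Submodule.span_eq_bot]
  rintro Q ⟨i, h1, h2, rfl⟩
  omega

lemma Uoperator_X0pow_mul_X1pow (p a k i : ℕ) (hik : i ≤ k) :
    Uoperator p a (X 0 ^ (k - i) * X 1 ^ i) =
      (∑ u ∈ Finset.range p, ∑ t ∈ Finset.range (k - i),
        (((u : ZMod (p ^ a)) ^ (k - i - t) * ((k - i).choose t : ZMod (p ^ a)))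
            * (p : ZMod (p ^ a)) ^ i) •
          (X 0 ^ (k - (k - t)) * X 1 ^ (k - t)))
      + (p : ZMod (p ^ a)) • ((p : ZMod (p ^ a)) ^ i • (X 0 ^ (k - i) * X 1 ^ i)) := by
  simp only [Uoperator, LinearMap.sum_apply, AlgHom.toLinearMap_apply, map_mul, map_pow,
    aeval_X, Matrix.cons_val_zero, Matrix.cons_val_one, Matrix.head_cons]
  have hsum : ∑ _u ∈ Finset.range p, ((p : ZMod (p ^ a)) ^ i •
        (X 0 ^ (k - i) * X 1 ^ i : MvPolynomial (Fin 2) (ZMod (p ^ a))))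
      = (p : ZMod (p ^ a)) • ((p : ZMod (p ^ a)) ^ i • (X 0 ^ (k - i) * X 1 ^ i)) := by
    rw [Finset.sum_const, Finset.card_range]
    exact (Nat.cast_smul_eq_nsmul (ZMod (p ^ a)) p _).symm
  rw [← hsum, ← Finset.sum_add_distrib]
  refine Finset.sum_congr rfl fun u _ => ?_
  rw [add_pow, Finset.sum_range_succ, Nat.sub_self, pow_zero, mul_one, Nat.choose_self,
    Nat.cast_one, mul_one, add_mul, Finset.sum_mul]
  congr 1
  · refine Finset.sum_congr rfl fun t ht => ?_
    rw [Finset.mem_range] at ht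
    have h1 : k - i - t + i = k - t := by omega
    have h2 : k - (k - t) = t := by omega
    rw [h2, ← h1, pow_add]
    simp only [smul_eq_C_mul, map_mul, map_pow, ← C_eq_coe_nat]
    ring
  · rw [smul_pow, mul_smul_comm]

/-- key step: T maps `Lsub j` into `p • Lsub j + Lsub (j+1)` (elementwise). -/
lemma Uoperator_step (p a k j : ℕ) {x : MvPolynomial (Fin 2) (ZMod (p ^ a))}
    (hx : x ∈ Lsub p a k j) :
    ∃ z ∈ Lsub p a k j, ∃ w ∈ Lsub p a k (j + 1),
      Uoperator p a x = (p : ZMod (p ^ a)) • z + w := by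
  induction hx using Submodule.span_induction with
  | mem Q hQ =>
    obtain ⟨i, hji, hik, rfl⟩ := hQ
    refine ⟨(p : ZMod (p ^ a)) ^ i • (X 0 ^ (k - i) * X 1 ^ i), ?_,
      ∑ u ∈ Finset.range p, ∑ t ∈ Finset.range (k - i),
        (((u : ZMod (p ^ a)) ^ (k - i - t) * ((k - i).choose t : ZMod (p ^ a)))
            * (p : ZMod (p ^ a)) ^ i) • (X 0 ^ (k - (k - t)) * X 1 ^ (k - t)), ?_, ?_⟩
    · exact Submodule.smul_mem _ _ (Submodule.subset_span ⟨i, hji, hik, rfl⟩)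
    · refine Submodule.sum_mem _ fun u _ => Submodule.sum_mem _ fun t ht => ?_
      rw [Finset.mem_range] at ht
      exact Submodule.smul_mem _ _ (Submodule.subset_span ⟨k - t, by omega, by omega, rfl⟩)
    · rw [Uoperator_X0pow_mul_X1pow p a k i hik, add_comm]
  | zero => exact ⟨0, Submodule.zero_mem _, 0, Submodule.zero_mem _, by simp⟩
  | add x y hx hy ihx ihy =>
    obtain ⟨z1, hz1, w1, hw1, e1⟩ := ihx
    obtain ⟨z2, hz2, w2, hw2, e2⟩ := ihy
    exact ⟨z1 + z2, Submodule.add_mem _ hz1 hz2, w1 + w2, Submodule.add_mem _ hw1 hw2, by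
      rw [map_add, e1, e2, smul_add]; ring⟩
  | smul c x hx ih =>
    obtain ⟨z, hz, w, hw, e⟩ := ih
    exact ⟨c • z, Submodule.smul_mem _ _ hz, c • w, Submodule.smul_mem _ _ hw, by
      rw [map_smul, e, smul_add, smul_comm c]⟩

lemma Uoperator_pow_step (p a k j m : ℕ) {x : MvPolynomial (Fin 2) (ZMod (p ^ a))}
    (hx : x ∈ Lsub p a k j) :
    ∃ z ∈ Lsub p a k j, ∃ w ∈ Lsub p a k (j + 1),
      (Uoperator p a ^ m) x = (p : ZMod (p ^ a)) ^ m • z + w := by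
  induction m with
  | zero => exact ⟨x, hx, 0, Submodule.zero_mem _, by simp⟩
  | succ m ih =>
    obtain ⟨z, hz, w, hw, e⟩ := ih
    obtain ⟨z', hz', w', hw', e'⟩ := Uoperator_step p a k j hz
    obtain ⟨z'', hz'', w'', hw'', e''⟩ := Uoperator_step p a k (j + 1) hw
    refine ⟨z', hz', (p : ZMod (p ^ a)) ^ m • w' + ((p : ZMod (p ^ a)) • z'' + w''), ?_, ?_⟩
    · exact Submodule.add_mem _ (Submodule.smul_mem _ _ hw')
        (Submodule.add_mem _ (Submodule.smul_mem _ _ hz'')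
          (Lsub_anti p a k (by omega) hw''))
    · rw [pow_succ', Module.End.mul_apply, e, map_add, map_smul, e', e'', smul_add, smul_smul,
        pow_succ]
      ring_nf

lemma Uoperator_pow_a (p a k j : ℕ) {x : MvPolynomial (Fin 2) (ZMod (p ^ a))}
    (hx : x ∈ Lsub p a k j) : (Uoperator p a ^ a) x ∈ Lsub p a k (j + 1) := by
  obtain ⟨z, hz, w, hw, e⟩ := Uoperator_pow_step p a k j a hx
  have hpa : (p : ZMod (p ^ a)) ^ a = 0 := by
    rw [← Nat.cast_pow, ZMod.natCast_self]
  rw [e, hpa, zero_smul, zero_add]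
  exact hw

/-- Let `O` be the ring of integers in a finite extension of `ℚ_p`, `a` a positive
integer, and `L = ⊕_{i=0}^k (O/𝔭^a) X^(k-i) Y^i` (modelled here over `Z/(p^a)`, which
suffices since `p^a = 0` there).  The operator `T(P) = ∑_{u=0}^{p-1} P(X + uY, pY)` is
nilpotent on `L`; in fact `T^(a(k+1)) = 0` on `L`. -/
theorem stmt_8 (p : ℕ) (hp : p.Prime) (a : ℕ) (ha : 0 < a) (k : ℕ)
    (P : MvPolynomial (Fin 2) (ZMod (p ^ a)))
    (hP : P ∈ Submodule.span (ZMod (p ^ a))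
        {Q : MvPolynomial (Fin 2) (ZMod (p ^ a)) | ∃ i ≤ k, Q = X 0 ^ (k - i) * X 1 ^ i}) :
    (Uoperator p a ^ (a * (k + 1))) P = 0 := by
  have h0 : P ∈ Lsub p a k 0 := by
    refine Submodule.span_mono ?_ hP
    rintro Q ⟨i, h1, rfl⟩
    exact ⟨i, Nat.zero_le _, h1, rfl⟩
  have key : ∀ m, (Uoperator p a ^ (a * m)) P ∈ Lsub p a k m := by
    intro m
    induction m with
    | zero => simpa using h0
    | succ m ih =>
      have : a * (m + 1) = a + a * m := by ring
      rw [this, pow_add, Module.End.mul_apply]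
      exact Uoperator_pow_a p a k m ih
  have := key (k + 1)
  rwa [Lsub_top_eq_bot, Submodule.mem_bot] at this
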